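/- Let p > 2, q = p/(p-1), α > -1, and set β = (2+α)/2. For k = 0, 1, 2, … define ε_k = ((2β/p)_k / k!) · ( Γ(k+2β) Γ(k+β) / (Γ(k+β+2β/q) Γ(k+2β/p)) − 1 ). Then there exists a constant C > 0 such that |ε_k| ≤ C (k+1)^{2β − 2β/q − 2} for all k ≥ 0. -/

import Mathlib

/-- The Pochhammer symbol `(a)_k = a(a+1)⋯(a+k-1)`. -/
noncomputable def poch (a : ℝ) (k : ℕ) : ℝ := Polynomial.eval a (ascPochhammer ℝ k)

/-- The coefficients
`ε_k = ((2β/p)_k / k!)(Γ(k+2β)Γ(k+β)/(Γ(k+β+2β/q)Γ(k+2β/p)) − 1)`. -/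
noncomputable def epsK (p q β : ℝ) (k : ℕ) : ℝ :=
  poch (2 * β / p) k / (Nat.factorial k) *
    (Real.Gamma (k + 2 * β) * Real.Gamma (k + β) /
      (Real.Gamma (k + β + 2 * β / q) * Real.Gamma (k + 2 * β / p)) - 1)


/-- Four-point inequality from log-convexity of Γ. -/
lemma logGamma_four {z w δ : ℝ} (hz : 0 < z) (hzw : z ≤ w) (hδ : 0 ≤ δ) :
    Real.Gamma (z + δ) * Real.Gamma w ≤ Real.Gamma z * Real.Gamma (w + δ) := by
  rcases eq_or_lt_of_le hδ with h0 | hδ'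
  · rw [← h0, add_zero, add_zero]
  have hw : 0 < w := lt_of_lt_of_le hz hzw
  have hd : 0 < w + δ - z := by linarith
  set t : ℝ := δ / (w + δ - z) with ht
  have ht0 : 0 ≤ t := div_nonneg hδ hd.le
  have ht1 : t ≤ 1 := (div_le_one hd).2 (by linarith)
  have hmemz : z ∈ Set.Ioi (0:ℝ) := hz
  have hmemw : (w + δ) ∈ Set.Ioi (0:ℝ) := Set.mem_Ioi.2 (by linarith)
  have h1 := Real.convexOn_log_Gamma.2 hmemz hmemw (by linarith : (0:ℝ) ≤ 1 - t) ht0 (by ring)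
  have h2 := Real.convexOn_log_Gamma.2 hmemz hmemw ht0 (by linarith : (0:ℝ) ≤ 1 - t) (by ring)
  have hc1 : (1 - t) • z + t • (w + δ) = z + δ := by
    show (1 - t) * z + t * (w + δ) = z + δ
    rw [ht]; field_simp; ring
  have hc2 : t • z + (1 - t) • (w + δ) = w := by
    show t * z + (1 - t) * (w + δ) = w
    rw [ht]; field_simp; ring
  rw [hc1] at h1; rw [hc2] at h2
  simp only [Function.comp_apply, smul_eq_mul] at h1 h2
  have hsum : Real.log (Real.Gamma (z + δ)) + Real.log (Real.Gamma w) ≤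
      Real.log (Real.Gamma z) + Real.log (Real.Gamma (w + δ)) := by linarith
  have p1 : 0 < Real.Gamma (z + δ) := Real.Gamma_pos_of_pos (by linarith)
  have p2 : 0 < Real.Gamma w := Real.Gamma_pos_of_pos hw
  have p3 : 0 < Real.Gamma z := Real.Gamma_pos_of_pos hz
  have p4 : 0 < Real.Gamma (w + δ) := Real.Gamma_pos_of_pos (by linarith)
  have := Real.exp_le_exp.2 hsum
  rwa [Real.exp_add, Real.exp_add, Real.exp_log p1, Real.exp_log p2, Real.exp_log p3,
    Real.exp_log p4] at this

/-- Wendel upper bound. -/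
lemma gamma_wendel1 {x s : ℝ} (hx : 0 < x) (hs0 : 0 ≤ s) (hs1 : s ≤ 1) :
    Real.Gamma (x + s) ≤ Real.Gamma x * x ^ s := by
  have hmem1 : x ∈ Set.Ioi (0:ℝ) := hx
  have hmem2 : (x + 1) ∈ Set.Ioi (0:ℝ) := Set.mem_Ioi.2 (by linarith)
  have h1 := Real.convexOn_log_Gamma.2 hmem1 hmem2 (by linarith : (0:ℝ) ≤ 1 - s) hs0 (by ring)
  have hc : (1 - s) • x + s • (x + 1) = x + s := by simp only [smul_eq_mul]; ring
  rw [hc] at h1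
  simp only [Function.comp_apply, smul_eq_mul] at h1
  have hG : Real.Gamma (x + 1) = x * Real.Gamma x := Real.Gamma_add_one hx.ne'
  have p1 : 0 < Real.Gamma x := Real.Gamma_pos_of_pos hx
  have p2 : 0 < Real.Gamma (x + s) := Real.Gamma_pos_of_pos (by linarith)
  rw [hG, Real.log_mul hx.ne' p1.ne'] at h1
  have h2 : Real.log (Real.Gamma (x + s)) ≤ Real.log (Real.Gamma x) + s * Real.log x := by
    linarith
  calc Real.Gamma (x + s) = Real.exp (Real.log (Real.Gamma (x + s))) := (Real.exp_log p2).symm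
    _ ≤ Real.exp (Real.log (Real.Gamma x) + s * Real.log x) := Real.exp_le_exp.2 h2
    _ = Real.Gamma x * x ^ s := by
        rw [Real.exp_add, Real.exp_log p1, Real.rpow_def_of_pos hx, mul_comm s]

/-- Wendel lower bound. -/
lemma gamma_wendel2 {x s : ℝ} (hx : 0 < x) (hs0 : 0 ≤ s) (hs1 : s ≤ 1) :
    Real.Gamma x * x ≤ Real.Gamma (x + s) * (x + s) ^ (1 - s) := by
  have h := gamma_wendel1 (x := x + s) (s := 1 - s) (by linarith) (by linarith) (by linarith)
  have hG : Real.Gamma (x + 1) = x * Real.Gamma x := Real.Gamma_add_one hx.ne'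
  have : x + s + (1 - s) = x + 1 := by ring
  rw [this, hG] at h
  linarith [h]

/-- Quantitative step lower bound. -/
lemma step_lb {z b δ : ℝ} (hz : 0 < z) (hb : 0 < b) (hδ0 : 0 ≤ δ) (hδ1 : δ ≤ 1) :
    z * (Real.Gamma z * Real.Gamma (z + b + δ)) ≤
      (z + b + δ) * (Real.Gamma (z + δ) * Real.Gamma (z + b)) := by
  have h1 : Real.Gamma z * z ≤ Real.Gamma (z + δ) * (z + δ) ^ (1 - δ) :=
    gamma_wendel2 hz hδ0 hδ1
  have h2 : Real.Gamma (z + b + δ) ≤ Real.Gamma (z + b) * (z + b) ^ δ :=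
    gamma_wendel1 (by linarith) hδ0 hδ1
  have pδ : 0 < Real.Gamma (z + δ) := Real.Gamma_pos_of_pos (by linarith)
  have pb : 0 < Real.Gamma (z + b) := Real.Gamma_pos_of_pos (by linarith)
  have pz : 0 < Real.Gamma z := Real.Gamma_pos_of_pos hz
  have pbd : 0 < Real.Gamma (z + b + δ) := Real.Gamma_pos_of_pos (by linarith)
  have e1 : (z + δ) ^ (1 - δ) ≤ (z + b + δ) ^ (1 - δ) :=
    Real.rpow_le_rpow (by linarith) (by linarith) (by linarith)
  have e2 : (z + b) ^ δ ≤ (z + b + δ) ^ δ :=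
    Real.rpow_le_rpow (by linarith) (by linarith) hδ0
  have key : z * (Real.Gamma z * Real.Gamma (z + b + δ)) ≤
      (Real.Gamma (z + δ) * Real.Gamma (z + b)) * ((z + b + δ) ^ (1 - δ) * (z + b + δ) ^ δ) := by
    calc z * (Real.Gamma z * Real.Gamma (z + b + δ))
        = (Real.Gamma z * z) * Real.Gamma (z + b + δ) := by ring
      _ ≤ (Real.Gamma (z + δ) * (z + δ) ^ (1 - δ)) * (Real.Gamma (z + b) * (z + b) ^ δ) := by
          apply mul_le_mul h1 h2 pbd.le
          positivity
      _ ≤ (Real.Gamma (z + δ) * (z + b + δ) ^ (1 - δ)) * (Real.Gamma (z + b) * (z + b + δ) ^ δ) := by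
          apply mul_le_mul (by nlinarith [Real.rpow_nonneg (by linarith : (0:ℝ) ≤ z + δ) (1-δ)])
            (by nlinarith [Real.rpow_nonneg (by linarith : (0:ℝ) ≤ z + b) δ]) (by positivity)
            (by positivity)
      _ = (Real.Gamma (z + δ) * Real.Gamma (z + b)) * ((z + b + δ) ^ (1 - δ) * (z + b + δ) ^ δ) := by
          ring
  have : (z + b + δ) ^ (1 - δ) * (z + b + δ) ^ δ = z + b + δ := by
    rw [← Real.rpow_add (by linarith)]
    norm_num
  rw [this] at key
  linarith [key]

/-- Telescoping ratio lower bound. -/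
lemma ratio_lb : ∀ n : ℕ, ∀ z b c : ℝ, 0 < z → 0 < b → 0 ≤ c → c ≤ n →
    1 - ((n : ℝ) * b + c) / z ≤
      Real.Gamma (z + c) * Real.Gamma (z + b) / (Real.Gamma z * Real.Gamma (z + b + c)) := by
  intro n
  induction n with
  | zero =>
    intro z b c hz hb hc0 hcn
    have hc : c = 0 := le_antisymm (by exact_mod_cast hcn) hc0
    subst hc
    have pz : 0 < Real.Gamma z := Real.Gamma_pos_of_pos hz
    have pb : 0 < Real.Gamma (z + b) := Real.Gamma_pos_of_pos (by linarith)
    simp only [add_zero, Nat.cast_zero, zero_mul, zero_div, sub_zero]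
    rw [div_self (by positivity)]
  | succ n ih =>
    intro z b c hz hb hc0 hcn
    have pz : 0 < Real.Gamma z := Real.Gamma_pos_of_pos hz
    have pb : 0 < Real.Gamma (z + b) := Real.Gamma_pos_of_pos (by linarith)
    have pc : 0 < Real.Gamma (z + c) := Real.Gamma_pos_of_pos (by linarith)
    have pbc : 0 < Real.Gamma (z + b + c) := Real.Gamma_pos_of_pos (by linarith)
    by_cases hcase : c ≤ (n : ℝ)
    · refine le_trans ?_ (ih z b c hz hb hc0 hcase)
      have heq : ((n + 1 : ℕ) : ℝ) * b + c = ((n : ℝ) * b + c) + b := by push_cast; ring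
      rw [heq, add_div]
      have : 0 ≤ b / z := by positivity
      linarith
    · push_neg at hcase
      set c' : ℝ := (n : ℝ) with hc'
      set δ : ℝ := c - (n : ℝ) with hδ
      have hδ0 : 0 < δ := by rw [hδ]; exact sub_pos.2 hcase
      have hδ1 : δ ≤ 1 := by
        have : c ≤ (n : ℝ) + 1 := by exact_mod_cast hcn
        rw [hδ]; linarith
      have hc'0 : 0 ≤ c' := by positivity
      have pc' : 0 < Real.Gamma (z + c') := Real.Gamma_pos_of_pos (by linarith)
      have pbc' : 0 < Real.Gamma (z + b + c') := Real.Gamma_pos_of_pos (by linarith)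
      set A : ℝ := Real.Gamma (z + c) * Real.Gamma (z + b + c') /
        (Real.Gamma (z + c') * Real.Gamma (z + b + c)) with hA
      set B : ℝ := Real.Gamma (z + c') * Real.Gamma (z + b) /
        (Real.Gamma z * Real.Gamma (z + b + c')) with hB
      have hAB : Real.Gamma (z + c) * Real.Gamma (z + b) /
          (Real.Gamma z * Real.Gamma (z + b + c)) = A * B := by
        rw [hA, hB]; field_simp
      have hA1 : A ≤ 1 := by
        rw [hA, div_le_one (by positivity)]
        have h4 := logGamma_four (z := z + c') (w := z + b + c') (δ := δ)
          (by linarith) (by linarith) hδ0.le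
        have e1 : z + c' + δ = z + c := by rw [hδ]; ring
        have e2 : z + b + c' + δ = z + b + c := by rw [hδ]; ring
        rw [e1, e2] at h4
        linarith [h4]
      have hB1 : B ≤ 1 := by
        rw [hB, div_le_one (by positivity)]
        have h4 := logGamma_four (z := z) (w := z + b) (δ := c') hz (by linarith) hc'0
        linarith [h4]
      have hB0 : 0 ≤ B := by rw [hB]; positivity
      have hzbc : (0:ℝ) < z + b + c := by linarith
      have hAlb : 1 - (b + δ) / z ≤ A := by
        have hstep := step_lb (z := z + c') (b := b) (δ := δ) (by linarith) hb hδ0.le hδ1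
        have e1 : z + c' + δ = z + c := by rw [hδ]; ring
        have e2 : z + c' + b + δ = z + b + c := by rw [hδ]; ring
        have e3 : z + c' + b = z + b + c' := by ring
        rw [e1, e2, e3] at hstep
        have hA' : (z + c') / (z + b + c) ≤ A := by
          rw [hA, div_le_div_iff₀ hzbc (by positivity)]
          nlinarith [hstep]
        have h5 : (b + δ) / (z + b + c) ≤ (b + δ) / z := by
          gcongr
          linarith
        have h6 : 1 - (b + δ) / (z + b + c) = (z + c') / (z + b + c) := by
          rw [hδ, hc']
          field_simp
          ring
        linarith
      have hBlb : 1 - ((n : ℝ) * b + c') / z ≤ B := ih z b c' hz hb hc'0 (le_refl _)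
      rw [hAB]
      have hu : 0 ≤ (b + δ) / z := by positivity
      have hv : 0 ≤ ((n : ℝ) * b + c') / z := by positivity
      have hprod : 1 - ((b + δ) / z + ((n : ℝ) * b + c') / z) ≤ A * B := by
        nlinarith [hA1, hB1, hB0, hAlb, hBlb]
      have heq : (((n + 1 : ℕ) : ℝ) * b + c) / z = (b + δ) / z + ((n : ℝ) * b + c') / z := by
        rw [hδ, hc', ← add_div]
        push_cast
        ring_nf
      linarith

/-- Gautschi-type bound. -/
lemma gautschi : ∀ n : ℕ, ∀ a : ℝ, 0 < a → a ≤ n → ∃ C : ℝ, 0 < C ∧ ∀ k : ℕ,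
    Real.Gamma (k + a) ≤ C * (k.factorial : ℝ) * ((k : ℝ) + 1) ^ (a - 1) := by
  intro n
  induction n with
  | zero => intro a ha han; exact absurd (lt_of_lt_of_le ha han) (by norm_num)
  | succ n ih =>
    intro a ha han
    by_cases ha1 : a ≤ 1
    · refine ⟨Real.Gamma a + 2 ^ (1 - a), by positivity, fun k => ?_⟩
      match k with
      | 0 =>
        simp only [Nat.cast_zero, zero_add, Nat.factorial_zero, Nat.cast_one, Real.one_rpow]
        have : (0:ℝ) < 2 ^ (1 - a) := by positivity
        linarith
      | (m + 1) =>
        set k : ℕ := m + 1 with hk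
        have hk1 : (1:ℝ) ≤ (k : ℝ) := by exact_mod_cast Nat.one_le_iff_ne_zero.2 (by omega)
        have hkpos : (0:ℝ) < (k : ℝ) := by linarith
        have h1 : Real.Gamma ((k : ℝ) + a) ≤ Real.Gamma (k : ℝ) * (k : ℝ) ^ a :=
          gamma_wendel1 hkpos ha.le ha1
        have hGk : Real.Gamma (k : ℝ) = (m.factorial : ℝ) := by
          rw [hk]; push_cast; exact_mod_cast Real.Gamma_nat_eq_factorial m
        have hsplit : (k : ℝ) ^ a = (k : ℝ) * (k : ℝ) ^ (a - 1) := by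
          nth_rewrite 1 [show a = 1 + (a - 1) by ring]
          rw [Real.rpow_add hkpos, Real.rpow_one]
        have hfact : (m.factorial : ℝ) * (k : ℝ) = (k.factorial : ℝ) := by
          rw [hk]; push_cast [Nat.factorial_succ]; ring
        have h2 : (k : ℝ) ^ (a - 1) ≤ 2 ^ (1 - a) * ((k : ℝ) + 1) ^ (a - 1) := by
          have e1 : ((k : ℝ) + 1) ^ (a - 1) ≥ (2 * (k : ℝ)) ^ (a - 1) :=
            Real.rpow_le_rpow_of_nonpos (by linarith) (by linarith) (by linarith)
          have e2 : (2 * (k : ℝ)) ^ (a - 1) = 2 ^ (a - 1) * (k : ℝ) ^ (a - 1) :=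
            Real.mul_rpow (by norm_num) (by linarith)
          have e3 : (2:ℝ) ^ (1 - a) * 2 ^ (a - 1) = 1 := by
            rw [← Real.rpow_add (by norm_num)]; norm_num
          calc (k : ℝ) ^ (a - 1) = (2:ℝ) ^ (1 - a) * (2 ^ (a - 1) * (k : ℝ) ^ (a - 1)) := by
                rw [← mul_assoc, e3, one_mul]
            _ ≤ (2:ℝ) ^ (1 - a) * ((k : ℝ) + 1) ^ (a - 1) := by
                rw [← e2]
                have : (0:ℝ) < 2 ^ (1 - a) := by positivity
                nlinarith [e1]
        calc Real.Gamma ((k : ℝ) + a) ≤ Real.Gamma (k : ℝ) * (k : ℝ) ^ a := h1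
          _ = (k.factorial : ℝ) * (k : ℝ) ^ (a - 1) := by
              rw [hGk, hsplit, ← mul_assoc, hfact]
          _ ≤ (k.factorial : ℝ) * (2 ^ (1 - a) * ((k : ℝ) + 1) ^ (a - 1)) := by
              have : (0:ℝ) ≤ (k.factorial : ℝ) := by positivity
              nlinarith [h2]
          _ ≤ (Real.Gamma a + 2 ^ (1 - a)) * (k.factorial : ℝ) * ((k : ℝ) + 1) ^ (a - 1) := by
              have hGa : 0 < Real.Gamma a := Real.Gamma_pos_of_pos ha
              have h3 : (0:ℝ) ≤ ((k : ℝ) + 1) ^ (a - 1) := by positivity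
              have h4 : (0:ℝ) < (k.factorial : ℝ) := by positivity
              nlinarith [mul_nonneg (mul_nonneg hGa.le h4.le) h3]
    · push_neg at ha1
      obtain ⟨C, hC, hbound⟩ := ih (a - 1) (by linarith)
        (by push_cast at han ⊢; linarith)
      refine ⟨a * C, by positivity, fun k => ?_⟩
      have h1 : Real.Gamma ((k : ℝ) + a) = ((k : ℝ) + a - 1) * Real.Gamma ((k : ℝ) + (a - 1)) := by
        have : (k : ℝ) + a = ((k : ℝ) + (a - 1)) + 1 := by ring
        rw [this, Real.Gamma_add_one (by nlinarith [Nat.cast_nonneg (α := ℝ) k])]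
        ring_nf
      have h2 := hbound k
      have hfac : (0:ℝ) < (k.factorial : ℝ) := by positivity
      have hx : (0:ℝ) < (k : ℝ) + 1 := by positivity
      have hrp : (0:ℝ) ≤ ((k : ℝ) + 1) ^ (a - 1 - 1) := by positivity
      have h3 : (k : ℝ) + a - 1 ≤ a * ((k : ℝ) + 1) := by nlinarith [Nat.cast_nonneg (α := ℝ) k]
      have h4 : ((k : ℝ) + 1) ^ (a - 1 - 1) * ((k : ℝ) + 1) = ((k : ℝ) + 1) ^ (a - 1) := by
        rw [← Real.rpow_add_one hx.ne']
        ring_nf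
      have hpos2 : (0:ℝ) < Real.Gamma ((k : ℝ) + (a - 1)) :=
        Real.Gamma_pos_of_pos (by nlinarith [Nat.cast_nonneg (α := ℝ) k])
      calc Real.Gamma ((k : ℝ) + a)
          = ((k : ℝ) + a - 1) * Real.Gamma ((k : ℝ) + (a - 1)) := h1
        _ ≤ (a * ((k : ℝ) + 1)) * (C * (k.factorial : ℝ) * ((k : ℝ) + 1) ^ (a - 1 - 1)) := by
            apply mul_le_mul h3 h2 hpos2.le
            positivity
        _ = a * C * (k.factorial : ℝ) * (((k : ℝ) + 1) ^ (a - 1 - 1) * ((k : ℝ) + 1)) := by ring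
        _ = a * C * (k.factorial : ℝ) * ((k : ℝ) + 1) ^ (a - 1) := by rw [h4]

/-- Pochhammer in terms of Gamma. -/
lemma poch_eq_gamma {a : ℝ} (ha : 0 < a) (k : ℕ) :
    poch a k = Real.Gamma (a + k) / Real.Gamma a := by
  have hGa : 0 < Real.Gamma a := Real.Gamma_pos_of_pos ha
  induction k with
  | zero => simp [poch, Real.Gamma_pos_of_pos, div_self hGa.ne']
  | succ k ih =>
    have hstep : poch a (k + 1) = poch a k * (a + k) := by
      simp [poch, ascPochhammer_succ_right, Polynomial.eval_mul]
    have hG : Real.Gamma (a + (k + 1 : ℕ)) = (a + k) * Real.Gamma (a + k) := by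
      have : a + ((k : ℕ) + 1 : ℕ) = (a + (k : ℕ)) + 1 := by push_cast; ring
      rw [this, Real.Gamma_add_one (by positivity)]
    rw [hstep, ih, hG]
    field_simp

lemma aux_id {g m K : ℝ} (hg : g ≠ 0) (hm : m ≠ 0) (hK : K ≠ 0) (C N Y : ℝ) :
    C / g * (Y * K) * (N / (m * K)) = C * N / (g * m) * Y := by
  field_simp

set_option maxHeartbeats 1000000 in
theorem epsK_bound (p q α β : ℝ) (hp : 2 < p) (hq : q = p / (p - 1)) (hα : -1 < α)
    (hβ : β = (2 + α) / 2) :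
    ∃ C : ℝ, 0 < C ∧ ∀ k : ℕ,
      |epsK p q β k| ≤ C * ((k : ℝ) + 1) ^ (2 * β - 2 * β / q - 2) := by
  have hp0 : (0:ℝ) < p := by linarith
  have hβpos : 0 < β := by rw [hβ]; linarith
  obtain ⟨a, haa⟩ : ∃ a : ℝ, a = 2 * β / p := ⟨_, rfl⟩
  have ha : 0 < a := by rw [haa]; positivity
  have hq2 : 2 * β / q = 2 * β - a := by
    have hp1 : p - 1 ≠ 0 := by intro h; rw [sub_eq_zero] at h; linarith
    rw [hq, haa]
    field_simp
  obtain ⟨c, hcc⟩ : ∃ c : ℝ, c = β - a := ⟨_, rfl⟩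
  have hc : 0 < c := by
    rw [hcc, haa, sub_pos, div_lt_iff₀ hp0]
    nlinarith
  obtain ⟨b, hbb⟩ : ∃ b : ℝ, b = 2 * β - a := ⟨_, rfl⟩
  have hb : 0 < b := by rw [hbb]; rw [hcc, sub_pos] at hc; linarith
  obtain ⟨n, hn⟩ : ∃ n : ℕ, n = ⌈c⌉₊ := ⟨_, rfl⟩
  have hcn : c ≤ (n : ℝ) := hn ▸ Nat.le_ceil c
  obtain ⟨C₁, hC₁, hC₁b⟩ := gautschi ⌈a⌉₊ a ha (Nat.le_ceil a)
  have hGa : 0 < Real.Gamma a := Real.Gamma_pos_of_pos ha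
  obtain ⟨μ, hμ⟩ : ∃ μ : ℝ, μ = min a 1 := ⟨_, rfl⟩
  have hμ0 : 0 < μ := hμ ▸ lt_min ha one_pos
  have hnbc : 0 < (n : ℝ) * b + c := by
    have := Nat.cast_nonneg (α := ℝ) n
    nlinarith
  refine ⟨C₁ * ((n : ℝ) * b + c) / (Real.Gamma a * μ),
    div_pos (mul_pos hC₁ hnbc) (mul_pos hGa hμ0), fun k => ?_⟩
  have hexp : 2 * β - 2 * β / q - 2 = a - 2 := by rw [hq2]; ring
  rw [hexp]
  have hkpos : (0:ℝ) ≤ (k : ℝ) := Nat.cast_nonneg k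
  obtain ⟨z, hzz⟩ : ∃ z : ℝ, z = (k : ℝ) + a := ⟨_, rfl⟩
  have hz : 0 < z := by rw [hzz]; linarith
  have e1 : (k : ℝ) + 2 * β = z + b := by rw [hzz, hbb]; ring
  have e2 : (k : ℝ) + β = z + c := by rw [hzz, hcc]; ring
  have e3 : (k : ℝ) + β + 2 * β / q = z + b + c := by rw [hq2, hzz, hcc, hbb]; ring
  have pz : 0 < Real.Gamma z := Real.Gamma_pos_of_pos hz
  have pb' : 0 < Real.Gamma (z + b) := Real.Gamma_pos_of_pos (by linarith)
  have pc' : 0 < Real.Gamma (z + c) := Real.Gamma_pos_of_pos (by linarith)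
  have pbc' : 0 < Real.Gamma (z + b + c) := Real.Gamma_pos_of_pos (by linarith)
  have hkf : (0:ℝ) < (k.factorial : ℝ) := by positivity
  -- the ratio
  obtain ⟨R, hR⟩ : ∃ R : ℝ, R = Real.Gamma (z + c) * Real.Gamma (z + b) /
      (Real.Gamma z * Real.Gamma (z + b + c)) := ⟨_, rfl⟩
  have hR1 : R ≤ 1 := by
    rw [hR, div_le_one (mul_pos pz pbc')]
    have h4 := logGamma_four (z := z) (w := z + b) (δ := c) hz (by linarith) hc.le
    linarith
  have hRlb : 1 - ((n : ℝ) * b + c) / z ≤ R := hR ▸ ratio_lb n z b c hz hb hc.le hcn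
  -- rewrite epsK
  have heps : epsK p q β k = poch a k / (k.factorial : ℝ) * (R - 1) := by
    rw [epsK, ← haa, e3, e1, e2, ← hzz, hR]
    ring_nf
  -- pochhammer part
  have hpoch : poch a k = Real.Gamma z / Real.Gamma a := by
    rw [poch_eq_gamma ha k, hzz, add_comm]
  have hP0 : 0 ≤ poch a k / (k.factorial : ℝ) := by
    rw [hpoch]
    exact div_nonneg (div_nonneg pz.le hGa.le) hkf.le
  have habs : |epsK p q β k| = poch a k / (k.factorial : ℝ) * (1 - R) := by
    rw [heps, abs_mul, abs_of_nonneg hP0, abs_of_nonpos (by linarith), neg_sub]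
  rw [habs]
  -- key bounds
  have key1 : poch a k / (k.factorial : ℝ) ≤ C₁ / Real.Gamma a * ((k : ℝ) + 1) ^ (a - 1) := by
    rw [hpoch, div_div, div_le_iff₀ (mul_pos hGa hkf)]
    have hg := hC₁b k
    rw [← hzz] at hg
    calc Real.Gamma z ≤ C₁ * (k.factorial : ℝ) * ((k : ℝ) + 1) ^ (a - 1) := hg
      _ = C₁ / Real.Gamma a * ((k : ℝ) + 1) ^ (a - 1) * (Real.Gamma a * (k.factorial : ℝ)) := by
          field_simp
  have hμz : μ * ((k : ℝ) + 1) ≤ z := by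
    have h1 : μ ≤ a := hμ ▸ min_le_left a 1
    have h2 : μ ≤ 1 := hμ ▸ min_le_right a 1
    rw [hzz]
    nlinarith
  have hden : 0 < μ * ((k : ℝ) + 1) := mul_pos hμ0 (by linarith)
  have key2 : 1 - R ≤ ((n : ℝ) * b + c) / (μ * ((k : ℝ) + 1)) := by
    have h5 : ((n : ℝ) * b + c) / z ≤ ((n : ℝ) * b + c) / (μ * ((k : ℝ) + 1)) :=
      div_le_div_of_nonneg_left hnbc.le hden hμz
    linarith
  have hrp : (0:ℝ) ≤ C₁ / Real.Gamma a * ((k : ℝ) + 1) ^ (a - 1) :=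
    mul_nonneg (div_nonneg hC₁.le hGa.le) (Real.rpow_nonneg (by linarith) _)
  have hfinal := mul_le_mul key1 key2 (by linarith) hrp
  refine le_trans hfinal (le_of_eq ?_)
  have hk1 : ((k : ℝ) + 1) ≠ 0 := by positivity
  have hr : ((k : ℝ) + 1) ^ (a - 1) = ((k : ℝ) + 1) ^ (a - 2) * ((k : ℝ) + 1) := by
    rw [← Real.rpow_add_one hk1]
    congr 1
    ring
  rw [hr]
  exact aux_id hGa.ne' hμ0.ne' hk1 C₁ ((n : ℝ) * b + c) (((k : ℝ) + 1) ^ (a - 2))
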